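/- For every R > 0, the mean of the exit-time density of the 1-ball equals R²: ∫_0^∞ t · f₁^exit(t) dt = R², consistent with the expected exit time R²/n of a standard n-dimensional Brownian motion from the ball of radius R for n = 1. -/

import Mathlib

open Real Filter Topology MeasureTheory

open Set

lemma beta3 : HasSum (fun k : ℕ => (-1:ℝ)^k / (2*(k:ℝ)+1)^3) (π^3/32) := by
  have h := hasSum_one_div_nat_pow_mul_sin (k := 1) one_ne_zero
    (x := (1:ℝ)/4) (by constructor <;> norm_num)
  have hval : ((-1 : ℝ)) ^ (1 + 1) * (2 * π) ^ (2 * 1 + 1) / 2 / (((2 * 1 + 1).factorial : ℝ)) *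
      (Polynomial.map (algebraMap ℚ ℝ) (Polynomial.bernoulli (2 * 1 + 1))).eval ((1:ℝ)/4)
      = π^3/32 := by
    rw [show (2*1+1 : ℕ) = 3 by norm_num]
    rw [show (Polynomial.bernoulli 3) = _ from Polynomial.bernoulli_def 3]
    simp [Finset.sum_range_succ, Polynomial.eval_monomial, bernoulli,
      bernoulli'_zero, bernoulli'_one, bernoulli'_two, bernoulli'_three, Nat.factorial]
    ring
  rw [hval] at h
  have hinj : Function.Injective (fun k : ℕ => 2 * k + 1) := by
    intro a b hab; simp only at hab; omega
  rw [← Function.Injective.hasSum_iff hinj ?_] at h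
  · refine h.congr_fun fun k => ?_
    simp only [Function.comp]
    have h1 : (2 * π * (((2 * k + 1 : ℕ)) : ℝ) * (1/4)) = π/2 + (k:ℝ) * π := by
      push_cast; ring
    rw [h1, Real.sin_add_nat_mul_pi, Real.sin_pi_div_two]
    rw [mul_one, one_div]
    push_cast
    rw [div_eq_mul_inv]; ring
  · intro n hn
    have : ∃ m, n = 2 * m := by
      rcases Nat.even_or_odd n with ⟨m, hm⟩ | ⟨m, hm⟩
      · exact ⟨m, by omega⟩
      · exact absurd (⟨m, by simp only []; omega⟩ : n ∈ Set.range fun k => 2*k+1) hn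
    obtain ⟨m, rfl⟩ := this
    have : (2 * π * ((2 * m : ℕ) : ℝ) * (1/4)) = (m:ℝ) * π := by push_cast; ring
    rw [this, Real.sin_nat_mul_pi, mul_zero]

lemma intOn_texp {b : ℝ} (hb : 0 < b) :
    IntegrableOn (fun t : ℝ => t * Real.exp (-(b * t))) (Ioi 0) := by
  have h := integrableOn_rpow_mul_exp_neg_mul_rpow (s := 1) (p := 1) (b := b)
    (by norm_num) (by norm_num) hb
  refine h.congr_fun (fun t ht => ?_) measurableSet_Ioi
  simp only [Real.rpow_one, neg_mul]

lemma int_texp {b : ℝ} (hb : 0 < b) :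
    ∫ t in Ioi (0:ℝ), t * Real.exp (-(b * t)) = 1 / b ^ 2 := by
  have h := integral_rpow_mul_exp_neg_mul_Ioi (a := 2) (r := b) (by norm_num) hb
  rw [show (2:ℝ) - 1 = 1 by norm_num] at h
  rw [show ∫ t in Ioi (0:ℝ), t * Real.exp (-(b * t))
      = ∫ t in Ioi (0:ℝ), t ^ (1:ℝ) * Real.exp (-(b * t)) from
    setIntegral_congr_fun measurableSet_Ioi (fun t ht => by rw [Real.rpow_one]), h,
    Real.Gamma_two]
  rw [Real.rpow_two]
  field_simp

/-- Exit-time density of a standard Brownian motion started at the center of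
`(-R, R)` and killed at `±R`. -/
noncomputable def f₁exit (R t : ℝ) : ℝ :=
  (π / (2 * R ^ 2)) * ∑' k : ℕ, (-1 : ℝ) ^ k * (2 * (k : ℝ) + 1) *
    Real.exp (-((2 * (k : ℝ) + 1) ^ 2 * π ^ 2 * t) / (8 * R ^ 2))

/-- The mean of the exit-time density of the 1-ball equals `R²`:
`∫_0^∞ t f₁^exit(t) dt = R²`. -/
theorem f₁exit_mean_eq_R_sq (R : ℝ) (hR : 0 < R) :
    ∫ t in Set.Ioi (0 : ℝ), t * f₁exit R t = R ^ 2 := by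
  have hπ := Real.pi_pos
  have hR' : R ≠ 0 := hR.ne'
  set c : ℝ := π / (2 * R ^ 2) with hc
  have hcpos : 0 < c := by positivity
  set b : ℕ → ℝ := fun k => (2 * (k:ℝ) + 1)^2 * π^2 / (8 * R^2) with hbdef
  have hb : ∀ k, 0 < b k := fun k => by
    have : (0:ℝ) < 2 * (k:ℝ) + 1 := by positivity
    positivity
  set F : ℕ → ℝ → ℝ :=
    fun k t => (c * ((-1:ℝ)^k * (2*(k:ℝ)+1))) * (t * Real.exp (-(b k * t))) with hF
  -- pointwise identity
  have hpt : ∀ t : ℝ, t * f₁exit R t = ∑' k, F k t := by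
    intro t
    rw [f₁exit, show t * ((π / (2 * R ^ 2)) * ∑' k : ℕ, (-1 : ℝ) ^ k * (2 * (k : ℝ) + 1) *
        Real.exp (-((2 * (k : ℝ) + 1) ^ 2 * π ^ 2 * t) / (8 * R ^ 2)))
      = (t * c) * ∑' k : ℕ, (-1 : ℝ) ^ k * (2 * (k : ℝ) + 1) *
        Real.exp (-((2 * (k : ℝ) + 1) ^ 2 * π ^ 2 * t) / (8 * R ^ 2)) by rw [hc]; ring,
      ← tsum_mul_left]
    refine tsum_congr fun k => ?_
    have hexp : -((2 * (k : ℝ) + 1) ^ 2 * π ^ 2 * t) / (8 * R ^ 2) = -(b k * t) := by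
      rw [hbdef]; field_simp
    rw [hF]
    simp only []
    rw [hexp]
    ring
  -- integrability
  have hint : ∀ k, Integrable (F k) (volume.restrict (Ioi (0:ℝ))) := fun k =>
    (intOn_texp (hb k)).const_mul _
  -- norm integrals
  have hnorm : ∀ k : ℕ, (∫ t in Ioi (0:ℝ), ‖F k t‖)
      = (c * 64 * R^4 / π^4) * ((2*(k:ℝ)+1)^3)⁻¹ := by
    intro k
    have hk1 : (0:ℝ) < 2 * (k:ℝ) + 1 := by positivity
    have h1 : ∀ t ∈ Ioi (0:ℝ), ‖F k t‖
        = (c * (2*(k:ℝ)+1)) * (t * Real.exp (-(b k * t))) := by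
      intro t ht
      rw [hF]
      simp only []
      rw [Real.norm_eq_abs, abs_mul, abs_mul, abs_mul, abs_pow, abs_neg, abs_one, one_pow,
        one_mul, abs_of_pos hcpos, abs_of_pos hk1, abs_of_pos (mul_pos (mem_Ioi.mp ht) (Real.exp_pos _))]
    rw [setIntegral_congr_fun measurableSet_Ioi h1, integral_const_mul, int_texp (hb k)]
    rw [hbdef]
    have : (2 * (k:ℝ) + 1) ≠ 0 := hk1.ne'
    field_simp
    ring
  have hsum3 : Summable (fun k : ℕ => ((2*(k:ℝ)+1)^3)⁻¹) := by
    have h0 : Summable (fun n : ℕ => ((n:ℝ)^3)⁻¹) := by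
      simpa [one_div] using Real.summable_one_div_nat_pow.mpr (by norm_num : 2 ≤ 3)
    refine Summable.of_nonneg_of_le (fun k => by positivity) (fun k => ?_)
      (h0.comp_injective Nat.succ_injective)
    show ((2 * (k:ℝ) + 1)^3)⁻¹ ≤ (((k.succ : ℕ):ℝ)^3)⁻¹
    have hs : ((k.succ : ℕ):ℝ) = (k:ℝ) + 1 := by push_cast; ring
    have hk0 : (0:ℝ) ≤ (k:ℝ) := Nat.cast_nonneg k
    rw [hs]
    refine inv_anti₀ (by positivity) ?_
    refine pow_le_pow_left₀ (by positivity) (by linarith) 3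
  have hsumnorm : Summable fun k : ℕ => ∫ t in Ioi (0:ℝ), ‖F k t‖ := by
    rw [show (fun k : ℕ => ∫ t in Ioi (0:ℝ), ‖F k t‖)
        = fun k : ℕ => (c * 64 * R^4 / π^4) * ((2*(k:ℝ)+1)^3)⁻¹ from funext hnorm]
    exact hsum3.mul_left _
  have key := integral_tsum_of_summable_integral_norm hint hsumnorm
  rw [setIntegral_congr_fun measurableSet_Ioi (fun t _ => hpt t), ← key]
  -- compute the sum of integrals
  have hterm : ∀ k : ℕ, (∫ t in Ioi (0:ℝ), F k t)
      = (32 * R^2 / π^3) * ((-1:ℝ)^k / (2*(k:ℝ)+1)^3) := by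
    intro k
    have hk1 : (0:ℝ) < 2 * (k:ℝ) + 1 := by positivity
    rw [hF]
    simp only []
    rw [integral_const_mul, int_texp (hb k), hbdef, hc]
    have : (2 * (k:ℝ) + 1) ≠ 0 := hk1.ne'
    field_simp
    ring
  rw [tsum_congr hterm, tsum_mul_left, beta3.tsum_eq]
  field_simp
  try ring
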